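/- arXiv:1708.04507 — 2 statements merged into one kernel-verified Lean document; each statement's English description precedes it below -/
import Mathlib

section
/- Let f be an (r,s)-even function. Then the discrete Fourier transform f̂(n) = Σ_{k=1}^{r^s} f(k) exp(-2πi·kn/r^s) equals Σ_{d | r} f(d^s) c_{r/d, s}(n), where c_{r,s} is the generalized Ramanujan sum. -/
open Finset

/-- The generalized gcd `(a,b)_s`: the largest `s`-th power dividing both `a` and `b`. -/
noncomputable def ggcd (s a b : ℕ) : ℕ :=
  sSup {m : ℕ | (∃ l : ℕ, m = l ^ s) ∧ m ∣ a ∧ m ∣ b}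

/-- The generalized Ramanujan sum `c_{r,s}(n)`. -/
noncomputable def crs (s r n : ℕ) : ℂ :=
  ∑ j ∈ Finset.Icc 1 (r ^ s),
    if ggcd s j (r ^ s) = 1 then Complex.exp (2 * Real.pi * Complex.I * n * j / (r ^ s)) else 0

/-- The discrete Fourier transform of an `r^s`-periodic function. -/
noncomputable def dft (s r : ℕ) (f : ℕ → ℂ) (n : ℕ) : ℂ :=
  ∑ k ∈ Finset.Icc 1 (r ^ s), f k * Complex.exp (-(2 * Real.pi * Complex.I * k * n / (r ^ s)))

/-- A function is `(r,s)`-even if `f(n) = f((n, r^s)_s)` for all `n`. -/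
def IsRSEven (s r : ℕ) (f : ℕ → ℂ) : Prop := ∀ n, f n = f (ggcd s n (r ^ s))

lemma ggcdSet_bdd (s a b : ℕ) (hb : 0 < b) :
    BddAbove {m : ℕ | (∃ l : ℕ, m = l ^ s) ∧ m ∣ a ∧ m ∣ b} :=
  ⟨b, fun _ hm => Nat.le_of_dvd hb hm.2.2⟩

lemma ggcd_mem (s a b : ℕ) (hb : 0 < b) :
    (∃ l, ggcd s a b = l ^ s) ∧ ggcd s a b ∣ a ∧ ggcd s a b ∣ b := by
  have h1 : (1:ℕ) ∈ {m : ℕ | (∃ l : ℕ, m = l ^ s) ∧ m ∣ a ∧ m ∣ b} :=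
    ⟨⟨1, (one_pow s).symm⟩, one_dvd _, one_dvd _⟩
  exact Nat.sSup_mem ⟨1, h1⟩ (ggcdSet_bdd s a b hb)

lemma ggcd_le (s a b m : ℕ) (hb : 0 < b) (hm : (∃ l, m = l ^ s) ∧ m ∣ a ∧ m ∣ b) :
    m ≤ ggcd s a b :=
  le_csSup (ggcdSet_bdd s a b hb) hm

lemma ggcd_mul (s d e j : ℕ) (hs : 0 < s) (hd : 0 < d) (he : 0 < e)
    (hj : ggcd s j (e ^ s) = 1) : ggcd s (d ^ s * j) ((d * e) ^ s) = d ^ s := by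
  have hes : 0 < e ^ s := pow_pos he s
  have hdes : 0 < (d * e) ^ s := pow_pos (Nat.mul_pos hd he) s
  refine le_antisymm ?_ (ggcd_le s _ _ _ hdes
    ⟨⟨d, rfl⟩, dvd_mul_right _ _, pow_dvd_pow_of_dvd (dvd_mul_right d e) s⟩)
  obtain ⟨⟨l, hl⟩, hka, hkb⟩ := ggcd_mem s (d ^ s * j) ((d * e) ^ s) hdes
  rw [hl] at hka hkb ⊢
  have hl0 : 0 < l := by
    rcases Nat.eq_zero_or_pos l with h | h
    · exfalso
      have h2 := Nat.pos_of_dvd_of_pos hkb hdes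
      rw [h, zero_pow hs.ne'] at h2
      exact absurd h2 (lt_irrefl 0)
    · exact h
  set g := Nat.gcd l d with hg
  have hg0 : 0 < g := Nat.gcd_pos_of_pos_right _ hd
  have hlg : l = g * (l / g) := (Nat.mul_div_cancel' (Nat.gcd_dvd_left l d)).symm
  have hdg : d = g * (d / g) := (Nat.mul_div_cancel' (Nat.gcd_dvd_right l d)).symm
  set l' := l / g
  set d' := d / g
  have hcop : Nat.Coprime l' d' := Nat.coprime_div_gcd_div_gcd hg0
  have hl'0 : 0 < l' := Nat.div_pos (Nat.le_of_dvd hl0 (Nat.gcd_dvd_left l d)) hg0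
  have hlde : l ∣ d * e := (Nat.pow_dvd_pow_iff hs.ne').mp hkb
  have hl'e : l' ∣ e := by
    have h3 : g * l' ∣ g * (d' * e) := by
      rw [← hlg, ← mul_assoc, ← hdg]; exact hlde
    exact (hcop.dvd_of_dvd_mul_left) ((Nat.mul_dvd_mul_iff_left hg0).mp h3)
  have hl'j : l' ^ s ∣ j := by
    have h1 : g ^ s * l' ^ s ∣ g ^ s * (d' ^ s * j) := by
      rw [← mul_pow, ← hlg, ← mul_assoc, ← mul_pow, ← hdg]; exact hka
    exact (Nat.Coprime.pow s s hcop).dvd_of_dvd_mul_left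
      ((Nat.mul_dvd_mul_iff_left (pow_pos hg0 s)).mp h1)
  have hle1 : l' ^ s ≤ 1 := by
    rw [← hj]
    exact ggcd_le s j (e ^ s) _ hes ⟨⟨l', rfl⟩, hl'j, pow_dvd_pow_of_dvd hl'e s⟩
  have hl'1 : l' = 1 := by
    have := Nat.le_antisymm hle1 (Nat.one_le_iff_ne_zero.mpr (pow_pos hl'0 s).ne')
    exact (pow_eq_one_iff.mp this).resolve_right hs.ne'
  have hld : l ∣ d := by rw [hlg, hl'1, mul_one]; exact Nat.gcd_dvd_right l d
  exact Nat.le_of_dvd (pow_pos hd s) (pow_dvd_pow_of_dvd hld s)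

lemma ggcd_factor (s d e k : ℕ) (hs : 0 < s) (hd : 0 < d) (he : 0 < e)
    (hk : ggcd s k ((d * e) ^ s) = d ^ s) : ggcd s (k / d ^ s) (e ^ s) = 1 := by
  have hes : 0 < e ^ s := pow_pos he s
  have hdes : 0 < (d * e) ^ s := pow_pos (Nat.mul_pos hd he) s
  have hdk : d ^ s ∣ k := by
    have := (ggcd_mem s k ((d * e) ^ s) hdes).2.1
    rwa [hk] at this
  set j := k / d ^ s with hjdef
  have hkj : k = d ^ s * j := (Nat.mul_div_cancel' hdk).symm
  refine le_antisymm ?_ (ggcd_le s j (e ^ s) 1 hes ⟨⟨1, (one_pow s).symm⟩, one_dvd _, one_dvd _⟩)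
  obtain ⟨⟨l, hl⟩, hja, hjb⟩ := ggcd_mem s j (e ^ s) hes
  have hl0 : 0 < l := by
    rcases Nat.eq_zero_or_pos l with h | h
    · exfalso
      have h2 := Nat.pos_of_dvd_of_pos hjb hes
      rw [hl, h, zero_pow hs.ne'] at h2
      exact absurd h2 (lt_irrefl 0)
    · exact h
  have hmem : (d * l) ^ s ≤ ggcd s k ((d * e) ^ s) := by
    refine ggcd_le s _ _ _ hdes ⟨⟨d * l, rfl⟩, ?_, ?_⟩
    · rw [hkj, mul_pow]
      exact Nat.mul_dvd_mul_left _ (by rw [← hl]; exact hja)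
    · exact pow_dvd_pow_of_dvd (Nat.mul_dvd_mul_left d
        ((Nat.pow_dvd_pow_iff hs.ne').mp (by rw [← hl]; exact hjb))) s
  rw [hk] at hmem
  have hge : d ^ s ≤ (d * l) ^ s :=
    Nat.le_of_dvd (pow_pos (Nat.mul_pos hd hl0) s) (pow_dvd_pow_of_dvd (dvd_mul_right d l) s)
  have heq : (d * l) ^ s = d ^ s := le_antisymm hmem hge
  rw [mul_pow] at heq
  have hls1 : l ^ s = 1 := by
    have hds : 0 < d ^ s := pow_pos hd s
    nlinarith [Nat.eq_of_mul_eq_mul_left hds (by rw [heq, mul_one] : d ^ s * l ^ s = d ^ s * 1)]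
  rw [hl, hls1]

lemma ggcd_exists_root (s r k : ℕ) (hs : 0 < s) (hr : 0 < r) :
    ∃ d, d ∣ r ∧ ggcd s k (r ^ s) = d ^ s := by
  have hrs : 0 < r ^ s := pow_pos hr s
  obtain ⟨⟨l, hl⟩, _, hb⟩ := ggcd_mem s k (r ^ s) hrs
  exact ⟨l, (Nat.pow_dvd_pow_iff hs.ne').mp (by rw [← hl]; exact hb), hl⟩

lemma ggcd_sub (s j b : ℕ) (hjb : j ≤ b) : ggcd s (b - j) b = ggcd s j b := by
  unfold ggcd
  congr 1
  ext m
  simp only [Set.mem_setOf_eq, and_congr_right_iff]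
  intro _
  constructor
  · rintro ⟨h1, h2⟩
    exact ⟨by simpa [Nat.sub_sub_self hjb] using Nat.dvd_sub h2 h1, h2⟩
  · rintro ⟨h1, h2⟩
    exact ⟨Nat.dvd_sub h2 h1, h2⟩

lemma ggcd_self (s b : ℕ) (hb : 0 < b) (l : ℕ) (hbl : b = l ^ s) : ggcd s b b = b :=
  le_antisymm (by
      obtain ⟨_, h, _⟩ := ggcd_mem s b b hb
      exact Nat.le_of_dvd hb h)
    (ggcd_le s b b b hb ⟨⟨l, hbl⟩, dvd_refl b, dvd_refl b⟩)

theorem stmt3 (s r : ℕ) (hs : 0 < s) (hr : 0 < r) (f : ℕ → ℂ)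
    (hf : IsRSEven s r f) (n : ℕ) :
    dft s r f n = ∑ d ∈ r.divisors, f (d ^ s) * crs s (r / d) n := by
  have hrs : 0 < r ^ s := pow_pos hr s
  unfold dft
  have step1 : ∑ k ∈ Icc 1 (r ^ s),
        f k * Complex.exp (-(2 * Real.pi * Complex.I * k * n / (r : ℂ) ^ s))
      = ∑ k ∈ Icc 1 (r ^ s), ∑ d ∈ r.divisors,
          if ggcd s k (r ^ s) = d ^ s then
            f k * Complex.exp (-(2 * Real.pi * Complex.I * k * n / (r : ℂ) ^ s)) else 0 := by
    refine Finset.sum_congr rfl fun k _ => ?_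
    obtain ⟨d₀, hd₀r, hd₀⟩ := ggcd_exists_root s r k hs hr
    rw [Finset.sum_eq_single_of_mem d₀ (Nat.mem_divisors.mpr ⟨hd₀r, hr.ne'⟩), if_pos hd₀]
    intro d hd hne
    rw [if_neg]
    intro hcon
    exact hne (Nat.pow_left_injective hs.ne' (hcon.symm.trans hd₀))
  rw [step1, Finset.sum_comm]
  refine Finset.sum_congr rfl fun d hd => ?_
  obtain ⟨hdr, _⟩ := Nat.mem_divisors.mp hd
  obtain ⟨e, hde⟩ := hdr
  have hd0 : 0 < d := Nat.pos_of_dvd_of_pos ⟨e, hde⟩ hr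
  have he0 : 0 < e := by
    rcases Nat.eq_zero_or_pos e with h | h
    · rw [h, mul_zero] at hde; exact absurd hde hr.ne'
    · exact h
  have hrd : r / d = e := by rw [hde]; exact Nat.mul_div_cancel_left e hd0
  have hes : 0 < e ^ s := pow_pos he0 s
  have hds : 0 < d ^ s := pow_pos hd0 s
  have heC : ((e : ℂ)) ^ s ≠ 0 := pow_ne_zero s (Nat.cast_ne_zero.mpr he0.ne')
  have hdC : ((d : ℂ)) ^ s ≠ 0 := pow_ne_zero s (Nat.cast_ne_zero.mpr hd0.ne')
  have hrC : ((r : ℂ)) = (d : ℂ) * (e : ℂ) := by exact_mod_cast congrArg (Nat.cast : ℕ → ℂ) hde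
  rw [← Finset.sum_filter]
  have hfd : ∀ k ∈ (Icc 1 (r ^ s)).filter (fun k => ggcd s k (r ^ s) = d ^ s),
      f k * Complex.exp (-(2 * Real.pi * Complex.I * k * n / (r : ℂ) ^ s))
        = f (d ^ s) * Complex.exp (-(2 * Real.pi * Complex.I * k * n / (r : ℂ) ^ s)) := by
    intro k hk
    rw [Finset.mem_filter] at hk
    rw [hf k, hk.2]
  rw [Finset.sum_congr rfl hfd, ← Finset.mul_sum, hrd]
  congr 1
  have hAB : ∑ k ∈ (Icc 1 (r ^ s)).filter (fun k => ggcd s k (r ^ s) = d ^ s),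
        Complex.exp (-(2 * Real.pi * Complex.I * k * n / (r : ℂ) ^ s))
      = ∑ j ∈ (Icc 1 (e ^ s)).filter (fun j => ggcd s j (e ^ s) = 1),
        Complex.exp (-(2 * Real.pi * Complex.I * j * n / (e : ℂ) ^ s)) := by
    refine Finset.sum_nbij' (fun k => k / d ^ s) (fun j => d ^ s * j) ?_ ?_ ?_ ?_ ?_
    · intro k hk
      rw [Finset.mem_filter, Finset.mem_Icc] at hk ⊢
      obtain ⟨⟨hk1, hk2⟩, hkg⟩ := hk
      have hdk : d ^ s ∣ k := by
        have := (ggcd_mem s k (r ^ s) hrs).2.1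
        rwa [hkg] at this
      refine ⟨⟨(Nat.one_le_div_iff hds).mpr (Nat.le_of_dvd hk1 hdk), ?_⟩, ?_⟩
      · calc k / d ^ s ≤ r ^ s / d ^ s := Nat.div_le_div_right hk2
          _ = e ^ s := by rw [hde, mul_pow, Nat.mul_div_cancel_left _ hds]
      · exact ggcd_factor s d e k hs hd0 he0 (by rwa [← hde])
    · intro j hj
      rw [Finset.mem_filter, Finset.mem_Icc] at hj ⊢
      obtain ⟨⟨hj1, hj2⟩, hjg⟩ := hj
      refine ⟨⟨Nat.one_le_iff_ne_zero.mpr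
          (Nat.mul_pos hds (lt_of_lt_of_le Nat.zero_lt_one hj1)).ne', ?_⟩, ?_⟩
      · calc d ^ s * j ≤ d ^ s * e ^ s := Nat.mul_le_mul_left _ hj2
          _ = r ^ s := by rw [hde, mul_pow]
      · show ggcd s (d ^ s * j) (r ^ s) = d ^ s
        rw [hde]
        exact ggcd_mul s d e j hs hd0 he0 hjg
    · intro k hk
      rw [Finset.mem_filter] at hk
      have hdk : d ^ s ∣ k := by
        have := (ggcd_mem s k (r ^ s) hrs).2.1
        rwa [hk.2] at this
      exact Nat.mul_div_cancel' hdk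
    · intro j _
      exact Nat.mul_div_cancel_left _ hds
    · intro k hk
      rw [Finset.mem_filter] at hk
      have hdk : d ^ s ∣ k := by
        have := (ggcd_mem s k (r ^ s) hrs).2.1
        rwa [hk.2] at this
      have hkC : (k : ℂ) = (d : ℂ) ^ s * ((k / d ^ s : ℕ) : ℂ) := by
        exact_mod_cast congrArg (Nat.cast : ℕ → ℂ) (Nat.mul_div_cancel' hdk).symm
      have hd1 : (d : ℂ) ≠ 0 := Nat.cast_ne_zero.mpr hd0.ne'
      have he1 : (e : ℂ) ≠ 0 := Nat.cast_ne_zero.mpr he0.ne'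
      congr 1
      rw [hkC, hrC, mul_pow]
      field_simp
  rw [hAB]
  unfold crs
  rw [← Finset.sum_filter]
  have hmemσ : ∀ j ∈ (Icc 1 (e ^ s)).filter (fun j => ggcd s j (e ^ s) = 1),
      (if j = e ^ s then j else e ^ s - j)
        ∈ (Icc 1 (e ^ s)).filter (fun j => ggcd s j (e ^ s) = 1) := by
    intro j hj
    rw [Finset.mem_filter, Finset.mem_Icc] at hj ⊢
    obtain ⟨⟨hj1, hj2⟩, hjg⟩ := hj
    by_cases hje : j = e ^ s
    · rw [if_pos hje]
      exact ⟨⟨hj1, hj2⟩, hjg⟩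
    · rw [if_neg hje]
      refine ⟨⟨by omega, Nat.sub_le _ _⟩, by rw [ggcd_sub s j (e ^ s) hj2]; exact hjg⟩
  have hinvσ : ∀ j ∈ (Icc 1 (e ^ s)).filter (fun j => ggcd s j (e ^ s) = 1),
      (if (if j = e ^ s then j else e ^ s - j) = e ^ s then (if j = e ^ s then j else e ^ s - j)
        else e ^ s - (if j = e ^ s then j else e ^ s - j)) = j := by
    intro j hj
    rw [Finset.mem_filter, Finset.mem_Icc] at hj
    obtain ⟨⟨hj1, hj2⟩, _⟩ := hj
    by_cases hje : j = e ^ s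
    · rw [if_pos hje, if_pos hje]
    · rw [if_neg hje]
      have h1 : e ^ s - j ≠ e ^ s := by omega
      rw [if_neg h1]
      omega
  refine Finset.sum_nbij' (fun j => if j = e ^ s then j else e ^ s - j)
    (fun j => if j = e ^ s then j else e ^ s - j) hmemσ hmemσ hinvσ hinvσ ?_
  intro j hj
  rw [Finset.mem_filter, Finset.mem_Icc] at hj
  obtain ⟨⟨hj1, hj2⟩, hjg⟩ := hj
  show Complex.exp (-(2 * Real.pi * Complex.I * (j : ℂ) * n / (e : ℂ) ^ s))
      = Complex.exp (2 * Real.pi * Complex.I * (n : ℂ)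
          * (((if j = e ^ s then j else e ^ s - j) : ℕ) : ℂ) / (e : ℂ) ^ s)
  by_cases hje : j = e ^ s
  · rw [if_pos hje]
    rw [hje] at hjg
    have he1 : e ^ s = 1 := by rw [← ggcd_self s (e ^ s) hes e rfl, hjg]
    have heC1 : ((e : ℂ)) ^ s = 1 := by exact_mod_cast congrArg (Nat.cast : ℕ → ℂ) he1
    have hjC : (j : ℂ) = 1 := by rw [hje]; exact_mod_cast congrArg (Nat.cast : ℕ → ℂ) he1
    rw [show -(2 * Real.pi * Complex.I * (j : ℂ) * n / (e : ℂ) ^ s)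
          = ((-(n : ℤ) : ℤ) : ℂ) * (2 * Real.pi * Complex.I) by
        rw [hjC, heC1]; push_cast; ring,
      show 2 * Real.pi * Complex.I * (n : ℂ) * (j : ℂ) / (e : ℂ) ^ s
          = (((n : ℤ)) : ℂ) * (2 * Real.pi * Complex.I) by
        rw [hjC, heC1]; push_cast; ring,
      Complex.exp_int_mul_two_pi_mul_I, Complex.exp_int_mul_two_pi_mul_I]
  · rw [if_neg hje]
    have hcast : ((e ^ s - j : ℕ) : ℂ) = (e : ℂ) ^ s - (j : ℂ) := by
      push_cast [hj2]
      ring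
    rw [hcast]
    have harg : 2 * Real.pi * Complex.I * (n : ℂ) * ((e : ℂ) ^ s - (j : ℂ)) / (e : ℂ) ^ s
        = ((n : ℤ) : ℂ) * (2 * Real.pi * Complex.I)
          + -(2 * Real.pi * Complex.I * (j : ℂ) * (n : ℂ) / (e : ℂ) ^ s) := by
      field_simp
      push_cast
      ring
    rw [harg, Complex.exp_add, Complex.exp_int_mul_two_pi_mul_I, one_mul]
end

section
/- For all positive integers n, r and s: Σ_{d | r} c_{d,s}(n) · c_{r,s}((r/d)^s) equals r^s if (n, r^s)_s = 1 and equals 0 otherwise. -/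
open Finset

lemma ggcd_eq_one_iff {s a b : ℕ} (hs : 0 < s) (ha : 0 < a) :
    ggcd s a b = 1 ↔ ∀ l : ℕ, l ^ s ∣ a → l ^ s ∣ b → l = 1 := by
  have hbdd : BddAbove {m : ℕ | (∃ l : ℕ, m = l ^ s) ∧ m ∣ a ∧ m ∣ b} := by
    refine ⟨a, fun m hm => Nat.le_of_dvd ha hm.2.1⟩
  have h1 : 1 ∈ {m : ℕ | (∃ l : ℕ, m = l ^ s) ∧ m ∣ a ∧ m ∣ b} :=
    ⟨⟨1, (one_pow s).symm⟩, one_dvd _, one_dvd _⟩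
  constructor
  · intro h l hla hlb
    have hmem : l ^ s ∈ {m : ℕ | (∃ l : ℕ, m = l ^ s) ∧ m ∣ a ∧ m ∣ b} := ⟨⟨l, rfl⟩, hla, hlb⟩
    have hle : l ^ s ≤ 1 := h ▸ le_csSup hbdd hmem
    have hlpos : l ≠ 0 := by
      rintro rfl
      rw [zero_pow hs.ne'] at hla
      exact absurd (Nat.eq_zero_of_zero_dvd hla) ha.ne'
    have : l ^ s = 1 := le_antisymm hle (Nat.one_le_iff_ne_zero.mpr (pow_ne_zero _ hlpos))
    exact (pow_eq_one_iff_left hs.ne').mp this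
  · intro h
    have : {m : ℕ | (∃ l : ℕ, m = l ^ s) ∧ m ∣ a ∧ m ∣ b} = {1} := by
      apply Set.eq_singleton_iff_unique_mem.mpr
      refine ⟨h1, ?_⟩
      rintro m ⟨⟨l, rfl⟩, hla, hlb⟩
      rw [h l hla hlb, one_pow]
    rw [ggcd, this, csSup_singleton]

lemma lcm_pow_dvd {s j e f : ℕ} (hs : 0 < s) (hj : j ≠ 0) (he : e ^ s ∣ j) (hf : f ^ s ∣ j) :
    Nat.lcm e f ^ s ∣ j := by
  have hene : e ≠ 0 := by
    rintro rfl; rw [zero_pow hs.ne'] at he; exact hj (Nat.eq_zero_of_zero_dvd he)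
  have hfne : f ≠ 0 := by
    rintro rfl; rw [zero_pow hs.ne'] at hf; exact hj (Nat.eq_zero_of_zero_dvd hf)
  have hlne : Nat.lcm e f ≠ 0 := Nat.lcm_ne_zero hene hfne
  rw [← Nat.factorization_le_iff_dvd (pow_ne_zero _ hlne) hj]
  rw [← Nat.factorization_le_iff_dvd (pow_ne_zero _ hene) hj] at he
  rw [← Nat.factorization_le_iff_dvd (pow_ne_zero _ hfne) hj] at hf
  intro p
  have heP := he p
  have hfP := hf p
  simp only [Nat.factorization_pow, Finsupp.smul_apply, smul_eq_mul] at *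
  rw [Nat.factorization_lcm hene hfne]
  simp only [Finsupp.sup_apply]
  rcases max_cases (e.factorization p) (f.factorization p) with ⟨h, _⟩ | ⟨h, _⟩ <;>
    rw [h] <;> assumption

open ArithmeticFunction in
lemma moebius_sum {s r j : ℕ} (hs : 0 < s) (hr : 0 < r) (hj : 0 < j) :
    (∑ e ∈ r.divisors, if e ^ s ∣ j then (ArithmeticFunction.moebius e : ℤ) else 0) =
      if ggcd s j (r ^ s) = 1 then 1 else 0 := by
  rw [← Finset.sum_filter]
  set D := r.divisors.filter (fun e => e ^ s ∣ j) with hDdef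
  have h1D : (1 : ℕ) ∈ D := by
    simp [hDdef, Nat.mem_divisors, hr.ne', one_pow]
  have hmemD : ∀ e, e ∈ D ↔ e ∣ r ∧ e ^ s ∣ j := by
    intro e; simp [hDdef, Nat.mem_divisors, hr.ne']
  by_cases h : ggcd s j (r ^ s) = 1
  · have hD : D = {1} := by
      apply Finset.eq_singleton_iff_unique_mem.mpr
      refine ⟨h1D, fun e he => ?_⟩
      rw [hmemD] at he
      exact (ggcd_eq_one_iff hs hj).mp h e he.2 (pow_dvd_pow_of_dvd he.1 s)
    rw [hD, if_pos h]
    simp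
  · have hne : D.Nonempty := ⟨1, h1D⟩
    set e0 := D.max' hne with he0def
    have he0D : e0 ∈ D := D.max'_mem hne
    have he0r : e0 ∣ r := ((hmemD e0).mp he0D).1
    have he0j : e0 ^ s ∣ j := ((hmemD e0).mp he0D).2
    have he0ne : e0 ≠ 0 := by
      rintro h0; rw [h0] at he0r; exact hr.ne' (Nat.eq_zero_of_zero_dvd he0r)
    have hD : D = e0.divisors := by
      ext t
      rw [hmemD, Nat.mem_divisors]
      constructor
      · rintro ⟨htr, htj⟩
        refine ⟨?_, he0ne⟩
        have hlcm : Nat.lcm t e0 ∈ D := by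
          rw [hmemD]
          exact ⟨Nat.lcm_dvd htr he0r, lcm_pow_dvd hs hj.ne' htj he0j⟩
        have hle : Nat.lcm t e0 ≤ e0 := D.le_max' _ hlcm
        have hge : e0 ≤ Nat.lcm t e0 :=
          Nat.le_of_dvd (Nat.pos_of_ne_zero (Nat.lcm_ne_zero
            (fun h0 => hr.ne' (Nat.eq_zero_of_zero_dvd (h0 ▸ htr))) he0ne))
            (Nat.dvd_lcm_right t e0)
        have heq : Nat.lcm t e0 = e0 := le_antisymm hle hge
        exact heq ▸ Nat.dvd_lcm_left t e0
      · rintro ⟨hte, _⟩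
        exact ⟨hte.trans he0r, (pow_dvd_pow_of_dvd hte s).trans he0j⟩
    have he0one : e0 ≠ 1 := by
      intro h1
      apply h
      rw [ggcd_eq_one_iff hs hj]
      intro l hlj hlr
      have hlr' : l ∣ r := (Nat.pow_dvd_pow_iff hs.ne').mp hlr
      have : l ∈ D := (hmemD l).mpr ⟨hlr', hlj⟩
      rw [hD, h1, Nat.divisors_one, Finset.mem_singleton] at this
      exact this
    rw [if_neg h, hD, ← ArithmeticFunction.coe_mul_zeta_apply,
      ArithmeticFunction.moebius_mul_coe_zeta, ArithmeticFunction.one_apply, if_neg he0one]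

lemma exp_sum {N : ℕ} (hN : 0 < N) (n : ℕ) :
    ∑ j ∈ Finset.Icc 1 N, Complex.exp (2 * Real.pi * Complex.I * n * j / N) =
      if N ∣ n then (N : ℂ) else 0 := by
  have hN0 : (N : ℂ) ≠ 0 := Nat.cast_ne_zero.mpr hN.ne'
  set ζ : ℂ := Complex.exp (2 * Real.pi * Complex.I * n / N) with hzdef
  have hz : ∀ j : ℕ, Complex.exp (2 * Real.pi * Complex.I * n * j / N) = ζ ^ j := by
    intro j
    rw [hzdef, ← Complex.exp_nat_mul]
    congr 1
    ring
  have hzN : ζ ^ N = 1 := by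
    rw [hzdef, ← Complex.exp_nat_mul]
    have harg : (N : ℂ) * (2 * Real.pi * Complex.I * n / N) = (n : ℤ) * (2 * Real.pi * Complex.I) := by
      push_cast
      field_simp
    rw [harg, Complex.exp_int_mul_two_pi_mul_I]
  by_cases hd : N ∣ n
  · have hz1 : ζ = 1 := by
      obtain ⟨k, rfl⟩ := hd
      rw [hzdef]
      have harg : 2 * (Real.pi : ℂ) * Complex.I * ((N * k : ℕ) : ℂ) / N
          = (k : ℤ) * (2 * Real.pi * Complex.I) := by
        push_cast
        field_simp
      rw [harg, Complex.exp_int_mul_two_pi_mul_I]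
    rw [if_pos hd]
    refine Eq.trans (Finset.sum_congr rfl (fun j _ => hz j)) ?_
    simp [hz1, Nat.card_Icc]
  · have hz1 : ζ ≠ 1 := by
      intro h1
      rw [hzdef, Complex.exp_eq_one_iff] at h1
      obtain ⟨k, hk⟩ := h1
      apply hd
      have h3 : (2 * (Real.pi:ℂ) * Complex.I) * ((n : ℂ) / N)
          = (2 * (Real.pi:ℂ) * Complex.I) * k := by
        rw [mul_comm ((k:ℂ)) (2 * (Real.pi:ℂ) * Complex.I)] at hk
        rw [← hk]; ring
      have h2 : (n : ℂ) / N = k := mul_left_cancel₀ Complex.two_pi_I_ne_zero h3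
      have h4 : (n : ℂ) = k * N := by
        field_simp at h2
        linear_combination h2
      have h5 : (n : ℤ) = k * N := by exact_mod_cast h4
      exact Int.ofNat_dvd.mp ⟨k, by rw [h5]; ring⟩
    rw [if_neg hd]
    refine Eq.trans (Finset.sum_congr rfl (fun j _ => hz j)) ?_
    rw [← Finset.Ico_add_one_right_eq_Icc, Finset.sum_Ico_eq_sum_range]
    simp only [Nat.add_sub_cancel, Nat.succ_sub_one]
    have : ∀ i, ζ ^ (1 + i) = ζ * ζ ^ i := fun i => by rw [pow_add, pow_one]
    rw [Finset.sum_congr rfl (fun i _ => this i), ← Finset.mul_sum, geom_sum_eq hz1, hzN]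
    simp

lemma crs_eq {s r : ℕ} (hs : 0 < s) (hr : 0 < r) (n : ℕ) :
    crs s r n = ∑ d ∈ r.divisors, (ArithmeticFunction.moebius (r / d) : ℂ) * ((d : ℂ) ^ s) *
      (if d ^ s ∣ n then 1 else 0) := by
  have key : ∀ j, 0 < j →
      ((∑ e ∈ r.divisors, if e ^ s ∣ j then ((ArithmeticFunction.moebius e : ℤ) : ℂ) else 0)
        = if ggcd s j (r ^ s) = 1 then (1 : ℂ) else 0) := by
    intro j hj
    have h2 := congrArg (fun z : ℤ => (z : ℂ)) (moebius_sum hs hr hj (s := s) (r := r) (j := j))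
    push_cast [apply_ite (fun z : ℤ => (z : ℂ))] at h2
    exact h2
  have step1 : crs s r n = ∑ j ∈ Finset.Icc 1 (r ^ s),
      (∑ e ∈ r.divisors, if e ^ s ∣ j then ((ArithmeticFunction.moebius e : ℤ) : ℂ) else 0) *
        Complex.exp (2 * Real.pi * Complex.I * n * j / (r ^ s)) := by
    rw [crs]
    refine Finset.sum_congr rfl fun j hj => ?_
    have hj1 : 0 < j := (Finset.mem_Icc.mp hj).1
    rw [key j hj1]
    split <;> simp
  rw [step1]
  have step2 : ∑ j ∈ Finset.Icc 1 (r ^ s),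
      (∑ e ∈ r.divisors, if e ^ s ∣ j then ((ArithmeticFunction.moebius e : ℤ) : ℂ) else 0) *
        Complex.exp (2 * Real.pi * Complex.I * n * j / (r ^ s))
      = ∑ e ∈ r.divisors, ((ArithmeticFunction.moebius e : ℤ) : ℂ) *
          ∑ j ∈ (Finset.Icc 1 (r ^ s)).filter (fun j => e ^ s ∣ j),
            Complex.exp (2 * Real.pi * Complex.I * n * j / (r ^ s)) := by
    simp_rw [Finset.sum_mul, ite_mul, zero_mul]
    rw [Finset.sum_comm]
    refine Finset.sum_congr rfl fun e _ => ?_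
    rw [Finset.mul_sum, ← Finset.sum_filter]
  rw [step2]
  have inner : ∀ e ∈ r.divisors,
      (∑ j ∈ (Finset.Icc 1 (r ^ s)).filter (fun j => e ^ s ∣ j),
          Complex.exp (2 * Real.pi * Complex.I * n * j / (r ^ s)))
        = if ((r / e) ^ s : ℕ) ∣ n then (((r / e) ^ s : ℕ) : ℂ) else 0 := by
    intro e he
    rw [Nat.mem_divisors] at he
    have hedvd : e ∣ r := he.1
    have hepos : 0 < e := Nat.pos_of_dvd_of_pos hedvd hr
    have hes : 0 < e ^ s := pow_pos hepos s
    have hrepos : 0 < r / e := Nat.div_pos (Nat.le_of_dvd hr hedvd) hepos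
    have hres : e ^ s * (r / e) ^ s = r ^ s := by
      rw [← mul_pow, Nat.mul_div_cancel' hedvd]
    have hressub : (r ^ s) / (e ^ s) = (r / e) ^ s := by
      rw [← hres, Nat.mul_div_cancel_left _ hes]
    rw [← exp_sum (pow_pos hrepos s) n]
    refine Finset.sum_bij' (fun j _ => j / e ^ s) (fun m _ => e ^ s * m) ?_ ?_ ?_ ?_ ?_
    · intro j hj
      rw [Finset.mem_filter, Finset.mem_Icc] at hj
      rw [Finset.mem_Icc]
      obtain ⟨⟨hj1, hj2⟩, hjd⟩ := hj
      constructor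
      · exact (Nat.one_le_div_iff hes).mpr (Nat.le_of_dvd hj1 hjd)
      · rw [← hressub]
        exact Nat.div_le_div_right hj2
    · intro m hm
      rw [Finset.mem_Icc] at hm
      rw [Finset.mem_filter, Finset.mem_Icc]
      exact ⟨⟨Nat.one_le_iff_ne_zero.mpr (Nat.mul_ne_zero hes.ne' (by omega)),
        by rw [← hres]; exact Nat.mul_le_mul_left _ hm.2⟩, Dvd.intro m rfl⟩
    · intro j hj
      rw [Finset.mem_filter] at hj
      exact Nat.mul_div_cancel' hj.2
    · intro m _
      exact Nat.mul_div_cancel_left m hes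
    · intro j hj
      rw [Finset.mem_filter] at hj
      obtain ⟨hjm, hjd⟩ := hj
      congr 1
      have hjc : (j : ℂ) = (e : ℂ) ^ s * ((j / e ^ s : ℕ) : ℂ) := by
        rw [← Nat.cast_pow, ← Nat.cast_mul, Nat.mul_div_cancel' hjd]
      have hrc : ((r : ℂ)) ^ s = (e : ℂ) ^ s * (((r / e : ℕ)) : ℂ) ^ s := by
        have hc := congrArg (fun k : ℕ => (k : ℂ)) hres
        push_cast at hc
        exact hc.symm
      have hene : ((e : ℂ)) ^ s ≠ 0 := pow_ne_zero _ (Nat.cast_ne_zero.mpr hepos.ne')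
      have hrene : (((r / e : ℕ) : ℂ)) ^ s ≠ 0 := pow_ne_zero _ (Nat.cast_ne_zero.mpr hrepos.ne')
      push_cast
      rw [hjc, hrc]
      field_simp
      all_goals ring
  rw [Finset.sum_congr rfl (fun e he => by rw [inner e he])]
  rw [← Nat.sum_div_divisors r (fun d => (ArithmeticFunction.moebius (r / d) : ℂ) * ((d : ℂ) ^ s)
    * (if d ^ s ∣ n then 1 else 0))]
  refine Finset.sum_congr rfl fun e he => ?_
  rw [Nat.mem_divisors] at he
  rw [Nat.div_div_self he.1 hr.ne']
  push_cast
  split <;> simp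

open ArithmeticFunction ArithmeticFunction.Moebius in
lemma sum_crs {s n : ℕ} (hs : 0 < s) (m : ℕ) (hm : 0 < m) :
    ∑ d ∈ m.divisors, crs s d n = if m ^ s ∣ n then ((m : ℂ) ^ s) else 0 := by
  set G : ArithmeticFunction ℂ :=
    ⟨fun a => if a ^ s ∣ n then (a : ℂ) ^ s else 0, by simp [zero_pow hs.ne']⟩ with hGdef
  have hGa : ∀ a, G a = if a ^ s ∣ n then (a : ℂ) ^ s else 0 := fun a => rfl
  have hcrs : ∀ d ∈ m.divisors, crs s d n = (G * (μ : ArithmeticFunction ℂ)) d := by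
    intro d hd
    rw [Nat.mem_divisors] at hd
    have hdpos : 0 < d := Nat.pos_of_dvd_of_pos hd.1 hm
    rw [crs_eq hs hdpos n, ArithmeticFunction.mul_apply,
      Nat.sum_divisorsAntidiagonal (fun a b => G a * ((μ : ArithmeticFunction ℂ) b))]
    refine Finset.sum_congr rfl fun a _ => ?_
    rw [hGa, ArithmeticFunction.intCoe_apply]
    split <;> ring
  rw [Finset.sum_congr rfl hcrs, ← ArithmeticFunction.coe_mul_zeta_apply, mul_assoc,
    ArithmeticFunction.coe_moebius_mul_coe_zeta, mul_one, hGa]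

open ArithmeticFunction ArithmeticFunction.Moebius in
private theorem stmt7' (s r n : ℕ) (hs : 0 < s) (hr : 0 < r) (hn : 0 < n) :
    ∑ d ∈ r.divisors, crs s d n * crs s r ((r / d) ^ s) =
      if ggcd s n (r ^ s) = 1 then (r : ℂ) ^ s else 0 := by
  have hrne : r ≠ 0 := hr.ne'
  have hsecond : ∀ d ∈ r.divisors, crs s r ((r / d) ^ s)
      = ∑ e ∈ r.divisors, ((μ (r / e) : ℤ) : ℂ) * ((e : ℂ) ^ s) *
          (if e ∣ r / d then 1 else 0) := by
    intro d _
    rw [crs_eq hs hr]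
    refine Finset.sum_congr rfl fun e _ => ?_
    simp only [Nat.pow_dvd_pow_iff hs.ne']
  rw [Finset.sum_congr rfl (fun d hd => by rw [hsecond d hd])]
  simp_rw [Finset.mul_sum]
  rw [Finset.sum_comm]
  have hinner : ∀ e ∈ r.divisors,
      (∑ d ∈ r.divisors, crs s d n * (((μ (r / e) : ℤ) : ℂ) * ((e : ℂ) ^ s) *
          (if e ∣ r / d then 1 else 0)))
      = ((μ (r / e) : ℤ) : ℂ) * ((r : ℂ) ^ s) * (if (r / e) ^ s ∣ n then 1 else 0) := by
    intro e he
    have hedvd := (Nat.mem_divisors.mp he).1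
    have hre : 0 < r / e := Nat.div_pos (Nat.le_of_dvd hr hedvd) (Nat.pos_of_dvd_of_pos hedvd hr)
    have h1 : (∑ d ∈ r.divisors, crs s d n * (((μ (r / e) : ℤ) : ℂ) * ((e : ℂ) ^ s) *
          (if e ∣ r / d then 1 else 0)))
        = ((μ (r / e) : ℤ) : ℂ) * ((e : ℂ) ^ s) *
            ∑ d ∈ r.divisors.filter (fun d => e ∣ r / d), crs s d n := by
      rw [Finset.sum_filter, Finset.mul_sum]
      refine Finset.sum_congr rfl fun d _ => ?_
      by_cases hP : e ∣ r / d
      · simp only [if_pos hP]; ring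
      · simp [hP]
    have h2 : r.divisors.filter (fun d => e ∣ r / d) = (r / e).divisors := by
      ext d
      simp only [Finset.mem_filter, Nat.mem_divisors]
      constructor
      · rintro ⟨⟨hdr, _⟩, hed⟩
        refine ⟨?_, hre.ne'⟩
        rw [Nat.dvd_div_iff_mul_dvd hdr] at hed
        rw [Nat.dvd_div_iff_mul_dvd hedvd]
        rwa [mul_comm]
      · rintro ⟨hdre, _⟩
        have hdr : d ∣ r := hdre.trans (Nat.div_dvd_of_dvd hedvd)
        refine ⟨⟨hdr, hrne⟩, ?_⟩
        rw [Nat.dvd_div_iff_mul_dvd hedvd] at hdre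
        rw [Nat.dvd_div_iff_mul_dvd hdr]
        rwa [mul_comm]
    rw [h1, h2, sum_crs hs (r / e) hre]
    have hcast : (e : ℂ) ^ s * ((r / e : ℕ) : ℂ) ^ s = (r : ℂ) ^ s := by
      have hc : ((e * (r / e)) ^ s : ℕ) = r ^ s := by rw [Nat.mul_div_cancel' hedvd]
      have := congrArg (fun k : ℕ => (k : ℂ)) hc
      push_cast at this
      calc (e : ℂ) ^ s * ((r / e : ℕ) : ℂ) ^ s = ((e : ℂ) * ((r / e : ℕ) : ℂ)) ^ s := by
            rw [mul_pow]
        _ = (r : ℂ) ^ s := by rw [this]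
    by_cases hP : (r / e) ^ s ∣ n
    · rw [if_pos hP, if_pos hP, mul_one, mul_assoc, hcast]
    · simp [hP]
  rw [Finset.sum_congr rfl hinner]
  rw [Nat.sum_div_divisors r
    (fun t => ((μ t : ℤ) : ℂ) * ((r : ℂ) ^ s) * (if t ^ s ∣ n then 1 else 0))]
  have hmoeb := moebius_sum (s := s) (r := r) (j := n) hs hr hn
  have hc := congrArg (fun z : ℤ => (z : ℂ)) hmoeb
  push_cast [apply_ite (fun z : ℤ => (z : ℂ))] at hc
  have hstep : ∀ t ∈ r.divisors,
      ((μ t : ℤ) : ℂ) * ((r : ℂ) ^ s) * (if t ^ s ∣ n then 1 else 0)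
        = (r : ℂ) ^ s * (if t ^ s ∣ n then ((μ t : ℤ) : ℂ) else 0) := by
    intro t _
    by_cases hP : t ^ s ∣ n
    · simp only [if_pos hP]; ring
    · simp [hP]
  rw [Finset.sum_congr rfl hstep, ← Finset.mul_sum, hc]
  by_cases hP : ggcd s n (r ^ s) = 1 <;> simp [hP]

theorem stmt7 (s r n : ℕ) (hs : 0 < s) (hr : 0 < r) (hn : 0 < n) :
    ∑ d ∈ r.divisors, crs s d n * crs s r ((r / d) ^ s) =
      if ggcd s n (r ^ s) = 1 then (r : ℂ) ^ s else 0 := by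
  exact stmt7' s r n hs hr hn
end
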